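/- Define E : [0,∞) × [0,1] → [0,1] by the supremum, over nonnegative f on I=[0,1) with ⟨f⟩_I = x and Carleson sequences α with constant ≤ 1 and ∑_{J}α_J|J| = y, of |{t ∈ I : ∑_J α_J⟨f⟩_J 1_J(t) > 1}|. Then E satisfies, for any λ ∈ (0,1]: E(x, y) ≥ λ·E(x/λ, y/λ) whenever (x/λ, y/λ) lies in the domain. -/

import Mathlib

open MeasureTheory

noncomputable section

/-- The dyadic subinterval of `[0,1)` at generation `n` with index `k` (for `k < 2ⁿ`):
`[k/2ⁿ, (k+1)/2ⁿ)`. -/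
def dyadIco (n k : ℕ) : Set ℝ := Set.Ico ((k : ℝ) / 2 ^ n) (((k : ℝ) + 1) / 2 ^ n)

/-- The average `⟨f⟩_J` of `f` over the dyadic interval `J` indexed by `(n,k)`. -/
def dyadAvg (f : ℝ → ℝ) (n k : ℕ) : ℝ := (2 : ℝ) ^ n * ∫ t in dyadIco n k, f t

/-- `(m,j)` indexes a dyadic subinterval of the dyadic interval indexed by `(n,k)`. -/
def dyadMem (n k m j : ℕ) : Prop :=
  n ≤ m ∧ k * 2 ^ (m - n) ≤ j ∧ j < (k + 1) * 2 ^ (m - n)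

/-- The positive dyadic shift (Lerner operator)
`𝓐f = ∑_{J ∈ 𝒟([0,1))} α_J ⟨f⟩_J 1_J`, with `α_J` indexed as `α n k`. -/
def shiftOp (α : ℕ → ℕ → ℝ) (f : ℝ → ℝ) (t : ℝ) : ℝ :=
  ∑' p : ℕ × ℕ, α p.1 p.2 * dyadAvg f p.1 p.2 * (dyadIco p.1 p.2).indicator 1 t

/-- The sequence `α` has Carleson constant at most `1`:
for every dyadic `J ⊆ [0,1)`, `(1/|J|) ∑_{K ∈ 𝒟(J)} α_K |K| ≤ 1`. -/
def CarlesonLeOne (α : ℕ → ℕ → ℝ) : Prop :=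
  ∀ n k : ℕ, k < 2 ^ n →
    (∑' p : ℕ × ℕ,
        {q : ℕ × ℕ | dyadMem n k q.1 q.2}.indicator
          (fun q => α q.1 q.2 * ((2 : ℝ) ^ q.1)⁻¹) p) ≤ ((2 : ℝ) ^ n)⁻¹

/-- The total mass `(1/|I|) ∑_{J ∈ 𝒟(I)} α_J |J|` of the sequence `α` on `I = [0,1)`. -/
def totalMass (α : ℕ → ℕ → ℝ) : ℝ := ∑' p : ℕ × ℕ, α p.1 p.2 * ((2 : ℝ) ^ p.1)⁻¹

/-- The admissible pairs `(f, α)` for the Bellman point `(x, y, 1)`: `f` nonnegative and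
integrable on `I = [0,1)` with `⟨f⟩_I = x`, and `α` a nonnegative sequence indexed by the
dyadic subintervals of `I`, with Carleson constant at most `1` and total mass `y`. -/
def Admissible (x y : ℝ) (f : ℝ → ℝ) (α : ℕ → ℕ → ℝ) : Prop :=
  (∀ t, 0 ≤ f t) ∧ IntegrableOn f (Set.Ico (0:ℝ) 1) ∧ dyadAvg f 0 0 = x ∧
  (∀ n k, 0 ≤ α n k) ∧ (∀ n k, 2 ^ n ≤ k → α n k = 0) ∧ CarlesonLeOne α ∧
  totalMass α = y

/-- The Bellman function `E(x,y) = 𝔹(x,y,1)`: the supremum over admissible `(f, α)` of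
`|{t ∈ [0,1) : 𝓐f(t) > 1}|`. -/
def BellmanE (x y : ℝ) : ℝ :=
  sSup {r : ℝ | ∃ f α, Admissible x y f α ∧
    r = (volume {t ∈ Set.Ico (0:ℝ) 1 | 1 < shiftOp α f t}).toReal}


section AuxSect
set_option linter.unusedSectionVars false
namespace Aux

lemma dyadIco_zero : dyadIco 0 0 = Set.Ico (0:ℝ) 1 := by
  simp [dyadIco]

lemma measurableSet_dyadIco (n k : ℕ) : MeasurableSet (dyadIco n k) :=
  measurableSet_Ico

lemma left_mem_dyadIco (n k : ℕ) : ((k:ℝ) / 2 ^ n) ∈ dyadIco n k := by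
  have hpn : (0:ℝ) < 2 ^ n := by positivity
  exact ⟨le_refl _, by apply div_lt_div_of_pos_right (by linarith) hpn⟩

lemma volume_dyadIco (n k : ℕ) : volume (dyadIco n k) = ENNReal.ofReal ((2 ^ n : ℝ)⁻¹) := by
  rw [dyadIco, Real.volume_Ico]
  congr 1
  field_simp
  ring

lemma dyadIco_subset_of_mem {n k m j : ℕ} (h : dyadMem n k m j) :
    dyadIco m j ⊆ dyadIco n k := by
  obtain ⟨hnm, h1, h2⟩ := h
  have hp : (0:ℝ) < 2 ^ m := by positivity
  have hpn : (0:ℝ) < 2 ^ n := by positivity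
  have hpow : (2:ℝ) ^ m = 2 ^ n * 2 ^ (m - n) := by
    rw [← pow_add]
    congr 1
    omega
  intro t ht
  obtain ⟨ht1, ht2⟩ := ht
  constructor
  · refine le_trans ?_ ht1
    rw [div_le_div_iff₀ hpn hp]
    calc (k:ℝ) * 2 ^ m = (k * 2 ^ (m-n) : ℕ) * 2 ^ n := by push_cast [hpow]; ring
    _ ≤ (j:ℝ) * 2 ^ n := by
        have : ((k * 2 ^ (m-n) : ℕ) : ℝ) ≤ (j:ℝ) := by exact_mod_cast h1
        exact mul_le_mul_of_nonneg_right this hpn.le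
  · refine lt_of_lt_of_le ht2 ?_
    rw [div_le_div_iff₀ hp hpn]
    calc ((j:ℝ) + 1) * 2 ^ n ≤ ((k + 1) * 2 ^ (m-n) : ℕ) * 2 ^ n := by
          have : (j:ℝ) + 1 ≤ ((k + 1) * 2 ^ (m-n) : ℕ) := by exact_mod_cast h2
          exact mul_le_mul_of_nonneg_right this hpn.le
    _ = ((k:ℝ) + 1) * 2 ^ m := by push_cast [hpow]; ring

lemma dyadMem_of_inter {n k m j : ℕ} (hnm : n ≤ m)
    (h : (dyadIco n k ∩ dyadIco m j).Nonempty) : dyadMem n k m j := by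
  obtain ⟨t, ⟨hk1, hk2⟩, hj1, hj2⟩ := h
  have hp : (0:ℝ) < 2 ^ m := by positivity
  have hpn : (0:ℝ) < 2 ^ n := by positivity
  have hpow : (2:ℝ) ^ m = 2 ^ n * 2 ^ (m - n) := by
    rw [← pow_add]; congr 1; omega
  refine ⟨hnm, ?_, ?_⟩
  · by_contra hc
    push_neg at hc
    have hc' : (j:ℕ) + 1 ≤ k * 2 ^ (m - n) := hc
    have : ((j:ℝ) + 1) / 2 ^ m ≤ (k:ℝ) / 2 ^ n := by
      rw [div_le_div_iff₀ hp hpn]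
      calc ((j:ℝ) + 1) * 2 ^ n ≤ ((k * 2 ^ (m-n):ℕ):ℝ) * 2 ^ n := by
            have : (j:ℝ) + 1 ≤ ((k * 2 ^ (m-n):ℕ):ℝ) := by exact_mod_cast hc'
            exact mul_le_mul_of_nonneg_right this hpn.le
      _ = (k:ℝ) * 2 ^ m := by push_cast [hpow]; ring
    linarith
  · by_contra hc
    push_neg at hc
    have : ((k:ℝ) + 1) / 2 ^ n ≤ (j:ℝ) / 2 ^ m := by
      rw [div_le_div_iff₀ hpn hp]
      calc ((k:ℝ) + 1) * 2 ^ m = (((k+1) * 2 ^ (m-n):ℕ):ℝ) * 2 ^ n := by push_cast [hpow]; ring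
      _ ≤ (j:ℝ) * 2 ^ n := by
            have : (((k+1) * 2 ^ (m-n):ℕ):ℝ) ≤ (j:ℝ) := by exact_mod_cast hc
            exact mul_le_mul_of_nonneg_right this hpn.le
    linarith

lemma dyadIco_nonempty (n k : ℕ) : (dyadIco n k).Nonempty :=
  ⟨_, left_mem_dyadIco n k⟩

lemma dyadMem_trans {n k m j p q : ℕ} (h1 : dyadMem n k m j) (h2 : dyadMem m j p q) :
    dyadMem n k p q := by
  have hsub := (dyadIco_subset_of_mem h2).trans (dyadIco_subset_of_mem h1)
  refine dyadMem_of_inter (h1.1.trans h2.1) ?_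
  obtain ⟨t, ht⟩ := dyadIco_nonempty p q
  exact ⟨t, hsub ht, ht⟩

lemma dyadMem_self (n k : ℕ) : dyadMem n k n k := by
  refine ⟨le_refl _, ?_, ?_⟩ <;> simp

lemma dyadMem_zero {n k : ℕ} (h : k < 2 ^ n) : dyadMem 0 0 n k := by
  refine ⟨Nat.zero_le _, by simp, by simpa using h⟩

lemma dyadIco_subset_Ico01 {n k : ℕ} (h : k < 2 ^ n) : dyadIco n k ⊆ Set.Ico (0:ℝ) 1 := by
  rw [← dyadIco_zero]
  exact dyadIco_subset_of_mem (dyadMem_zero h)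




lemma tsum_eq_toReal_tsum_ofReal {ι : Type*} {h : ι → ℝ} (hnn : ∀ i, 0 ≤ h i) :
    ∑' i, h i = (∑' i, ENNReal.ofReal (h i)).toReal := by
  by_cases hs : Summable h
  · rw [← ENNReal.ofReal_tsum_of_nonneg hnn hs, ENNReal.toReal_ofReal (tsum_nonneg hnn)]
  · rw [tsum_eq_zero_of_not_summable hs]
    have : ∑' i, ENNReal.ofReal (h i) = ⊤ := by
      by_contra hc
      have := ENNReal.summable_toReal hc
      apply hs
      refine this.congr fun i => ?_
      exact ENNReal.toReal_ofReal (hnn i)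
    simp [this]

lemma measurable_tsum_nonneg {ι : Type*} [Countable ι] {h : ι → ℝ → ℝ}
    (hm : ∀ i, Measurable (h i)) (hnn : ∀ i t, 0 ≤ h i t) :
    Measurable fun t => ∑' i, h i t := by
  have : (fun t => ∑' i, h i t) = fun t => (∑' i, ENNReal.ofReal (h i t)).toReal := by
    funext t
    exact tsum_eq_toReal_tsum_ofReal (fun i => hnn i t)
  rw [this]
  exact (Measurable.ennreal_tsum fun i => (hm i).ennreal_ofReal).ennreal_toReal

/-- pushforward of Lebesgue under an expanding affine map `t ↦ c t - d`. -/
lemma map_volume_affine {c d : ℝ} (hc : 0 < c) :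
    Measure.map (fun t => c * t - d) volume = ENNReal.ofReal c⁻¹ • volume := by
  have h1 : (fun t : ℝ => c * t - d) = (fun t : ℝ => t + -d) ∘ (fun t : ℝ => c * t) := by
    funext t; simp [sub_eq_add_neg]
  rw [h1, ← Measure.map_map (by fun_prop) (by fun_prop),
    Real.map_volume_mul_left (ne_of_gt hc), Measure.map_smul,
    map_add_right_eq_self volume (-d), abs_of_pos (inv_pos.mpr hc)]

lemma measurable_affine {c d : ℝ} : Measurable (fun t : ℝ => c * t - d) := by fun_prop

lemma preimage_affine_Ico {c d a b : ℝ} (hc : 0 < c) :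
    (fun t : ℝ => c * t - d) ⁻¹' Set.Ico a b = Set.Ico ((a + d)/c) ((b + d)/c) := by
  ext t
  simp only [Set.mem_preimage, Set.mem_Ico]
  constructor
  · rintro ⟨h1, h2⟩
    constructor
    · rw [div_le_iff₀ hc]; linarith
    · rw [lt_div_iff₀ hc]; linarith
  · rintro ⟨h1, h2⟩
    rw [div_le_iff₀ hc] at h1
    rw [lt_div_iff₀ hc] at h2
    constructor <;> linarith

lemma volume_preimage_affine {c d : ℝ} (hc : 0 < c) {s : Set ℝ} (hs : MeasurableSet s) :
    volume ((fun t : ℝ => c * t - d) ⁻¹' s) = ENNReal.ofReal c⁻¹ * volume s := by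
  rw [← Measure.map_apply measurable_affine hs, map_volume_affine hc]
  simp

lemma map_restrict_affine {c d : ℝ} (hc : 0 < c) {s : Set ℝ} (hs : MeasurableSet s) :
    Measure.map (fun t : ℝ => c * t - d) (volume.restrict ((fun t : ℝ => c * t - d) ⁻¹' s)) =
      ENNReal.ofReal c⁻¹ • volume.restrict s := by
  rw [← Measure.restrict_map measurable_affine hs, map_volume_affine hc,
    Measure.restrict_smul]




def bfl (l : ℝ) (m : ℕ) : ℕ := ⌊l * 2 ^ m⌋₊

def Dig (l : ℝ) (m : ℕ) : Prop := bfl l (m + 1) = 2 * bfl l m + 1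

instance (l : ℝ) (m : ℕ) : Decidable (Dig l m) := inferInstanceAs (Decidable (_ = _))

def cellSet (l : ℝ) (m : ℕ) : Set ℝ := dyadIco (m + 1) (2 * bfl l m)

def TT (l : ℝ) (m : ℕ) (t : ℝ) : ℝ := 2 ^ (m + 1) * t - (2 * bfl l m : ℕ)

section digits
variable {l : ℝ} (hl0 : 0 < l) (hl1 : l < 1)

lemma bfl_le (m : ℕ) (hl0' : 0 ≤ l) : (bfl l m : ℝ) ≤ l * 2 ^ m :=
  Nat.floor_le (by positivity)

lemma lt_bfl_add_one (m : ℕ) : l * 2 ^ m < bfl l m + 1 :=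
  Nat.lt_floor_add_one _

include hl0 hl1 in
lemma bfl_lt (m : ℕ) : bfl l m < 2 ^ m := by
  have h2 : l * 2 ^ m < ((2 ^ m : ℕ) : ℝ) := by
    push_cast
    nlinarith [pow_pos (show (0:ℝ) < 2 by norm_num) m]
  exact Nat.floor_lt (by positivity) |>.mpr h2

include hl0 in
lemma bfl_succ_ge (m : ℕ) : 2 * bfl l m ≤ bfl l (m + 1) := by
  have h2 : ((2 * bfl l m : ℕ) : ℝ) ≤ l * 2 ^ (m + 1) := by
    push_cast
    rw [pow_succ]
    nlinarith [bfl_le (l := l) m hl0.le]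
  exact Nat.le_floor h2

include hl0 in
lemma bfl_succ (m : ℕ) : bfl l (m + 1) = 2 * bfl l m ∨ Dig l m := by
  have h1 := bfl_succ_ge hl0 m
  have h2 : bfl l (m + 1) < 2 * bfl l m + 2 := by
    have : l * 2 ^ (m + 1) < ((2 * bfl l m + 2 : ℕ) : ℝ) := by
      push_cast
      rw [pow_succ]
      nlinarith [lt_bfl_add_one (l := l) m]
    exact Nat.floor_lt (by positivity) |>.mpr this
  unfold Dig
  omega

include hl0 hl1 in
lemma dig_exists : ∃ m, Dig l m := by
  by_contra hc
  push_neg at hc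
  have hz : ∀ m, bfl l m = 0 := by
    intro m
    induction m with
    | zero =>
      unfold bfl
      rw [pow_zero, mul_one, Nat.floor_eq_zero]
      exact hl1
    | succ m ih =>
      rcases bfl_succ hl0 m with h | h
      · omega
      · exact absurd h (hc m)
  obtain ⟨m, hm⟩ := pow_unbounded_of_one_lt (1/l) (by norm_num : (1:ℝ) < 2)
  have h1 : l * 2 ^ m < 1 := by
    have h2 := lt_bfl_add_one (l := l) m
    rw [hz m] at h2
    simpa using h2
  rw [div_lt_iff₀ hl0] at hm
  nlinarith

omit hl0 in
include hl0 in
lemma bfl_div_mono : Monotone (fun m => (bfl l m : ℝ) / 2 ^ m) := by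
  apply monotone_nat_of_le_succ
  intro m
  have h1' : 2 * (bfl l m : ℝ) ≤ bfl l (m + 1) := by
    exact_mod_cast bfl_succ_ge hl0 m
  have hp' : (0:ℝ) < 2 ^ m := by positivity
  rw [div_le_div_iff₀ (by positivity) (by positivity)]
  rw [pow_succ]
  nlinarith [mul_le_mul_of_nonneg_right h1' hp'.le]

include hl0 hl1 in
lemma tendsto_bfl_div :
    Filter.Tendsto (fun m => (bfl l m : ℝ) / 2 ^ m) Filter.atTop (nhds l) := by
  have hup : ∀ m, (bfl l m : ℝ) / 2 ^ m ≤ l := by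
    intro m
    rw [div_le_iff₀ (by positivity)]
    exact bfl_le m hl0.le
  have hlo : ∀ m, l - (1/2) ^ m ≤ (bfl l m : ℝ) / 2 ^ m := by
    intro m
    have hp : (0:ℝ) < 2 ^ m := by positivity
    have key : l ≤ ((bfl l m : ℝ) + 1) / 2 ^ m := by
      rw [le_div_iff₀ hp]
      linarith [lt_bfl_add_one (l := l) m]
    have e : ((1:ℝ)/2) ^ m = ((2:ℝ) ^ m)⁻¹ := by
      rw [one_div, inv_pow]
    have e2 : ((bfl l m : ℝ) + 1) / 2 ^ m = (bfl l m : ℝ) / 2 ^ m + ((2:ℝ) ^ m)⁻¹ := by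
      ring
    rw [e]
    linarith
  refine tendsto_of_tendsto_of_tendsto_of_le_of_le (g := fun m => l - (1/2:ℝ)^m)
    (h := fun _ => l) ?_ tendsto_const_nhds hlo hup
  have : Filter.Tendsto (fun m => ((1:ℝ)/2) ^ m) Filter.atTop (nhds 0) := by
    apply tendsto_pow_atTop_nhds_zero_of_lt_one <;> norm_num
  simpa using (tendsto_const_nhds (x := l)).sub this

include hl0 hl1 in
lemma digit_partial_sum (M : ℕ) :
    ∑ m ∈ Finset.range M, (if Dig l m then ((2:ℝ) ^ (m+1))⁻¹ else 0) = (bfl l M : ℝ) / 2 ^ M := by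
  induction M with
  | zero =>
    rw [Finset.range_zero, Finset.sum_empty]
    unfold bfl
    rw [pow_zero, mul_one, Nat.floor_eq_zero.mpr hl1]
    simp
  | succ M ih =>
    rw [Finset.sum_range_succ, ih]
    by_cases h : Dig l M
    · rw [if_pos h]
      have hc : (bfl l (M+1) : ℝ) = 2 * (bfl l M : ℝ) + 1 := by
        unfold Dig at h
        rw [h]
        push_cast
        ring
      rw [hc, pow_succ]
      field_simp
    · rcases bfl_succ hl0 M with h2 | h2
      · rw [if_neg h]
        have hc : (bfl l (M+1) : ℝ) = 2 * (bfl l M : ℝ) := by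
          rw [h2]; push_cast; ring
        rw [hc, pow_succ]
        field_simp
        ring
      · exact absurd h2 h

include hl0 hl1 in
lemma digit_hasSum : HasSum (fun m => if Dig l m then ((2:ℝ) ^ (m+1))⁻¹ else 0) l := by
  have hsm : Summable (fun m => if Dig l m then ((2:ℝ) ^ (m+1))⁻¹ else 0) := by
    refine Summable.of_nonneg_of_le (fun m => ?_) (fun m => ?_)
      (summable_geometric_of_lt_one (le_of_lt one_half_pos) (by norm_num) :
        Summable fun m => ((1:ℝ)/2) ^ m)
    · split_ifs <;> positivity
    · split_ifs with h
      · rw [one_div, inv_pow, inv_le_inv₀ (by positivity) (by positivity)]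
        apply pow_le_pow_right₀ (by norm_num)
        omega
      · positivity
  have h1 := hsm.hasSum.tendsto_sum_nat
  have h2 : Filter.Tendsto
      (fun M => ∑ m ∈ Finset.range M, (if Dig l m then ((2:ℝ) ^ (m+1))⁻¹ else 0))
      Filter.atTop (nhds l) :=
    (tendsto_bfl_div hl0 hl1).congr fun M => (digit_partial_sum hl0 hl1 M).symm
  have heq := tendsto_nhds_unique h1 h2
  have h3 := hsm.hasSum
  rwa [heq] at h3

include hl0 hl1 in
lemma cell_lt (m : ℕ) (h : Dig l m) : 2 * bfl l m + 1 ≤ 2 ^ (m + 1) := by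
  have := bfl_lt hl0 hl1 (m + 1)
  unfold Dig at h
  omega

include hl0 hl1 in
lemma cellSet_disjoint {m m' : ℕ} (hne : m ≠ m') (h : Dig l m) (h' : Dig l m') :
    Disjoint (cellSet l m) (cellSet l m') := by
  have key : ∀ a b : ℕ, a < b → Dig l a → Dig l b →
      Disjoint (cellSet l a) (cellSet l b) := by
    intro a b hab ha hb
    unfold cellSet dyadIco
    rw [Set.Ico_disjoint_Ico]
    have e1 : ((2 * bfl l a : ℕ) : ℝ) + 1 = (bfl l (a+1) : ℝ) := by
      unfold Dig at ha
      rw [ha]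
      push_cast
      ring
    have e2 : ((2 * bfl l b : ℕ) : ℝ) / 2 ^ (b+1) = (bfl l b : ℝ) / 2 ^ b := by
      push_cast
      rw [pow_succ]
      field_simp
    have h2 : (((2 * bfl l a : ℕ) : ℝ) + 1) / 2 ^ (a+1) ≤ ((2 * bfl l b : ℕ) : ℝ) / 2 ^ (b+1) := by
      rw [e1, e2]
      exact bfl_div_mono hl0 (show a + 1 ≤ b by omega)
    exact le_trans (min_le_left _ _) (le_trans h2 (le_max_right _ _))
  rcases lt_or_gt_of_ne hne with hlt | hgt
  · exact key m m' hlt h h'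
  · exact (key m' m hgt h' h).symm

include hl0 hl1 in
lemma cellSet_subset (m : ℕ) (h : Dig l m) : cellSet l m ⊆ Set.Ico (0:ℝ) 1 := by
  unfold cellSet dyadIco
  rintro t ⟨h1, h2⟩
  have h3 : ((2 * bfl l m : ℕ) : ℝ) + 1 ≤ (2:ℝ) ^ (m+1) := by
    calc ((2 * bfl l m : ℕ) : ℝ) + 1 = ((2 * bfl l m + 1 : ℕ) : ℝ) := by push_cast; ring
    _ ≤ ((2 ^ (m+1) : ℕ) : ℝ) := by exact_mod_cast cell_lt hl0 hl1 m h
    _ = (2:ℝ) ^ (m+1) := by push_cast; ring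
  constructor
  · exact le_trans (by positivity) h1
  · refine lt_of_lt_of_le h2 ?_
    rw [div_le_one (by positivity)]
    exact h3

end digits


/-! ### Embedding arithmetic -/

lemma pow_recomb {a b : ℕ} (h : a ≤ b) : 2 ^ a * 2 ^ (b - a) = 2 ^ b := by
  rw [← pow_add]
  congr 1
  omega

lemma emb_mem {m b q1 q2 : ℕ} (h : q2 < 2 ^ q1) :
    dyadMem (m+1) b (q1 + (m+1)) (q2 + b * 2 ^ q1) := by
  refine ⟨by omega, ?_, ?_⟩
  · have he : (q1 + (m+1)) - (m+1) = q1 := by omega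
    rw [he]
    omega
  · have he : (q1 + (m+1)) - (m+1) = q1 := by omega
    rw [he, add_mul, one_mul]
    omega

lemma mem_emb {m b n j : ℕ} (h : dyadMem (m+1) b n j) :
    ∃ q1 q2, q2 < 2 ^ q1 ∧ n = q1 + (m+1) ∧ j = q2 + b * 2 ^ q1 := by
  obtain ⟨h1, h2, h3⟩ := h
  have he : (b + 1) * 2 ^ (n - (m+1)) = b * 2 ^ (n - (m+1)) + 2 ^ (n - (m+1)) := by ring
  refine ⟨n - (m+1), j - b * 2 ^ (n - (m+1)), by omega, by omega, by omega⟩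

lemma emb_trans_iff {m b n' k' q1 q2 : ℕ} (h : q2 < 2 ^ q1) :
    dyadMem (n' + (m+1)) (k' + b * 2 ^ n') (q1 + (m+1)) (q2 + b * 2 ^ q1) ↔
      dyadMem n' k' q1 q2 := by
  unfold dyadMem
  by_cases hn : n' ≤ q1
  · have he : (q1 + (m+1)) - (n' + (m+1)) = q1 - n' := by omega
    have hp : 2 ^ n' * 2 ^ (q1 - n') = 2 ^ q1 := pow_recomb hn
    have e2 : (k' + b * 2 ^ n') * 2 ^ (q1 - n') = k' * 2 ^ (q1 - n') + b * 2 ^ q1 := by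
      rw [add_mul, mul_assoc, hp]
    have e3 : (k' + b * 2 ^ n' + 1) * 2 ^ (q1 - n') =
        (k' + 1) * 2 ^ (q1 - n') + b * 2 ^ q1 := by
      rw [add_mul, add_mul, add_mul, one_mul, mul_assoc, hp]
      ring
    rw [he, e2, e3]
    constructor
    · rintro ⟨_, u2, u3⟩
      exact ⟨hn, by omega, by omega⟩
    · rintro ⟨_, u2, u3⟩
      exact ⟨by omega, by omega, by omega⟩
  · constructor
    · rintro ⟨u1, _, _⟩
      omega
    · rintro ⟨u1, _, _⟩
      omega

section withL
variable {l : ℝ} (hl0 : 0 < l) (hl1 : l < 1)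

include hl0 hl1 in
lemma dig_uniq {m m' n j : ℕ} (hm : Dig l m) (hm' : Dig l m')
    (h : dyadMem (m+1) (2 * bfl l m) n j) (h' : dyadMem (m'+1) (2 * bfl l m') n j) :
    m = m' := by
  by_contra hne
  have hd := cellSet_disjoint hl0 hl1 hne hm hm'
  obtain ⟨t, ht⟩ := dyadIco_nonempty n j
  exact Set.disjoint_left.mp hd (dyadIco_subset_of_mem h ht) (dyadIco_subset_of_mem h' ht)

/-! ### The transplanted Carleson sequence -/

open Classical in
def atil (l : ℝ) (α : ℕ → ℕ → ℝ) (n j : ℕ) : ℝ :=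
  if h : ∃ m, Dig l m ∧ dyadMem (m+1) (2 * bfl l m) n j then
    α (n - (h.choose + 1)) (j - 2 * bfl l h.choose * 2 ^ (n - (h.choose + 1)))
  else 0

variable {α : ℕ → ℕ → ℝ}

include hl0 hl1 in
lemma atil_eq {m n j : ℕ} (hm : Dig l m) (h : dyadMem (m+1) (2 * bfl l m) n j) :
    atil l α n j = α (n - (m + 1)) (j - 2 * bfl l m * 2 ^ (n - (m + 1))) := by
  unfold atil
  have hex : ∃ m, Dig l m ∧ dyadMem (m+1) (2 * bfl l m) n j := ⟨m, hm, h⟩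
  rw [dif_pos hex]
  have hche := dig_uniq hl0 hl1 hex.choose_spec.1 hm hex.choose_spec.2 h
  rw [hche]

include hl0 hl1 in
lemma atil_emb {m q1 q2 : ℕ} (hm : Dig l m) (hq : q2 < 2 ^ q1) :
    atil l α (q1 + (m+1)) (q2 + 2 * bfl l m * 2 ^ q1) = α q1 q2 := by
  rw [atil_eq hl0 hl1 hm (emb_mem hq)]
  have he : (q1 + (m+1)) - (m+1) = q1 := by omega
  rw [he]
  congr 1
  omega

lemma atil_nonneg (hα : ∀ n k, 0 ≤ α n k) (n j : ℕ) : 0 ≤ atil l α n j := by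
  unfold atil
  split_ifs
  · apply hα
  · exact le_refl 0

lemma atil_ne_zero {n j : ℕ} (h : atil l α n j ≠ 0) :
    ∃ m, Dig l m ∧ dyadMem (m+1) (2 * bfl l m) n j := by
  by_contra hc
  apply h
  unfold atil
  rw [dif_neg hc]

include hl0 hl1 in
lemma atil_vanish {n j : ℕ} (h : 2 ^ n ≤ j) : atil l α n j = 0 := by
  by_contra hc
  obtain ⟨m, hm, hmem⟩ := atil_ne_zero hc
  obtain ⟨hm1, hm2, hm3⟩ := hmem
  have hc1 : (2 * bfl l m + 1) * 2 ^ (n - (m+1)) ≤ 2 ^ (m+1) * 2 ^ (n - (m+1)) :=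
    Nat.mul_le_mul_right _ (cell_lt hl0 hl1 m hm)
  rw [pow_recomb hm1] at hc1
  omega

/-! ### The transplanted function -/

def ftil (l : ℝ) (f : ℝ → ℝ) : ℝ → ℝ := fun t =>
  ∑' m, if Dig l m then (cellSet l m).indicator (fun s => f (TT l m s)) t else 0

variable {f : ℝ → ℝ}

lemma ftil_nonneg (hf : ∀ t, 0 ≤ f t) (t : ℝ) : 0 ≤ ftil l f t := by
  apply tsum_nonneg
  intro m
  split_ifs
  · apply Set.indicator_nonneg
    intro s _
    apply hf
  · exact le_refl 0

include hl0 hl1 in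
lemma piece_vanish {m m' : ℕ} (hne : m' ≠ m) (hm : Dig l m) {t : ℝ} (ht : t ∈ cellSet l m) :
    (if Dig l m' then (cellSet l m').indicator (fun s => f (TT l m' s)) t else 0) = 0 := by
  split_ifs with hm'
  · apply Set.indicator_of_notMem
    intro ht'
    exact Set.disjoint_left.mp (cellSet_disjoint hl0 hl1 hne hm' hm) ht' ht
  · rfl

include hl0 hl1 in
lemma ftil_eq_on_cell {m : ℕ} (hm : Dig l m) {t : ℝ} (ht : t ∈ cellSet l m) :
    ftil l f t = f (TT l m t) := by
  unfold ftil
  rw [tsum_eq_single m (fun m' hne => piece_vanish hl0 hl1 hne hm ht)]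
  rw [if_pos hm, Set.indicator_of_mem ht]

include hl0 hl1 in
lemma ftil_eq_zero {t : ℝ} (ht : ∀ m, Dig l m → t ∉ cellSet l m) : ftil l f t = 0 := by
  unfold ftil
  have hz : ∀ m, (if Dig l m then (cellSet l m).indicator (fun s => f (TT l m s)) t else 0) = 0 := by
    intro m
    split_ifs with hm
    · exact Set.indicator_of_notMem (ht m hm) _
    · rfl
  rw [tsum_congr hz]
  exact tsum_zero

lemma measurable_ftil (hf : Measurable f) (hfnn : ∀ t, 0 ≤ f t) : Measurable (ftil l f) := by
  apply measurable_tsum_nonneg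
  · intro m
    split_ifs
    · exact (hf.comp measurable_affine).indicator (measurableSet_dyadIco _ _)
    · exact measurable_const
  · intro m t
    split_ifs
    · exact Set.indicator_nonneg (fun s _ => hfnn _) _
    · exact le_refl 0

/-! ### Change of variables along `TT` -/

lemma measurable_TT (l : ℝ) (m : ℕ) : Measurable (TT l m) := measurable_affine

lemma TT_preimage_dyadIco (l : ℝ) (m q1 q2 : ℕ) :
    TT l m ⁻¹' (dyadIco q1 q2) = dyadIco (q1 + (m+1)) (q2 + 2 * bfl l m * 2 ^ q1) := by
  unfold TT dyadIco
  rw [preimage_affine_Ico (by positivity)]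
  have hp : ((2:ℝ) ^ (q1 + (m+1))) = 2 ^ q1 * 2 ^ (m+1) := pow_add 2 q1 (m+1)
  have e1 : ((q2:ℝ) / 2 ^ q1 + ((2 * bfl l m : ℕ):ℝ)) / 2 ^ (m+1)
      = (((q2 + 2 * bfl l m * 2 ^ q1 : ℕ)):ℝ) / 2 ^ (q1 + (m+1)) := by
    push_cast [hp]
    try field_simp
    try ring
  have e2 : (((q2:ℝ)+1) / 2 ^ q1 + ((2 * bfl l m : ℕ):ℝ)) / 2 ^ (m+1)
      = ((((q2 + 2 * bfl l m * 2 ^ q1 : ℕ)):ℝ)+1) / 2 ^ (q1 + (m+1)) := by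
    push_cast [hp]
    try field_simp
    try ring
  rw [e1, e2]

lemma TT_preimage_Ico01 (l : ℝ) (m : ℕ) :
    TT l m ⁻¹' (Set.Ico (0:ℝ) 1) = cellSet l m := by
  have h := TT_preimage_dyadIco l m 0 0
  rw [dyadIco_zero] at h
  rw [h]
  unfold cellSet
  norm_num

lemma TT_mem_Ico01 {l : ℝ} {m : ℕ} {t : ℝ} (ht : t ∈ cellSet l m) :
    TT l m t ∈ Set.Ico (0:ℝ) 1 := by
  rw [← TT_preimage_Ico01 l m] at ht
  exact ht

lemma map_restrict_TT (l : ℝ) (m : ℕ) {s : Set ℝ} (hs : MeasurableSet s) :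
    Measure.map (TT l m) (volume.restrict (TT l m ⁻¹' s)) =
      ENNReal.ofReal (((2:ℝ) ^ (m+1))⁻¹) • volume.restrict s := by
  unfold TT
  exact map_restrict_affine (by positivity) hs

include hl0 hl1 in
lemma dyadAvg_ftil (hf : Measurable f) {m q1 q2 : ℕ} (hm : Dig l m) (hq : q2 < 2 ^ q1) :
    dyadAvg (ftil l f) (q1 + (m+1)) (q2 + 2 * bfl l m * 2 ^ q1) = dyadAvg f q1 q2 := by
  unfold dyadAvg
  have hpre := TT_preimage_dyadIco l m q1 q2
  have hsubcell : dyadIco (q1 + (m+1)) (q2 + 2 * bfl l m * 2 ^ q1) ⊆ cellSet l m :=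
    dyadIco_subset_of_mem (emb_mem hq)
  have h1 : ∫ t in dyadIco (q1 + (m+1)) (q2 + 2 * bfl l m * 2 ^ q1), ftil l f t
      = ∫ t in dyadIco (q1 + (m+1)) (q2 + 2 * bfl l m * 2 ^ q1), f (TT l m t) := by
    apply setIntegral_congr_fun (measurableSet_dyadIco _ _)
    intro t ht
    exact ftil_eq_on_cell hl0 hl1 hm (hsubcell ht)
  have h2 : ∫ t in dyadIco (q1 + (m+1)) (q2 + 2 * bfl l m * 2 ^ q1), f (TT l m t)
      = (((2:ℝ) ^ (m+1))⁻¹) • ∫ s in dyadIco q1 q2, f s := by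
    calc ∫ t in dyadIco (q1 + (m+1)) (q2 + 2 * bfl l m * 2 ^ q1), f (TT l m t)
        = ∫ s, f s ∂(Measure.map (TT l m) (volume.restrict (TT l m ⁻¹' (dyadIco q1 q2)))) := by
          rw [integral_map (measurable_TT l m).aemeasurable hf.aestronglyMeasurable, hpre]
    _ = ∫ s, f s ∂(ENNReal.ofReal (((2:ℝ) ^ (m+1))⁻¹) • volume.restrict (dyadIco q1 q2)) := by
          rw [map_restrict_TT l m (measurableSet_dyadIco q1 q2)]
    _ = (((2:ℝ) ^ (m+1))⁻¹) • ∫ s in dyadIco q1 q2, f s := by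
          rw [integral_smul_measure, ENNReal.toReal_ofReal (by positivity)]
  rw [h1, h2, smul_eq_mul, pow_add]
  have hne : ((2:ℝ) ^ (m+1)) ≠ 0 := by positivity
  field_simp

end withL

lemma indicator_one_preimage (s : Set ℝ) (g : ℝ → ℝ) (t : ℝ) :
    (g ⁻¹' s).indicator (1 : ℝ → ℝ) t = s.indicator 1 (g t) := rfl

lemma dyadAvg_nonneg {f : ℝ → ℝ} (hfnn : ∀ t, 0 ≤ f t) (n k : ℕ) : 0 ≤ dyadAvg f n k :=
  mul_nonneg (by positivity) (setIntegral_nonneg (measurableSet_dyadIco n k) fun t _ => hfnn t)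

lemma measurable_shiftOp {α : ℕ → ℕ → ℝ} {f : ℝ → ℝ} (hα0 : ∀ n k, 0 ≤ α n k)
    (hfnn : ∀ t, 0 ≤ f t) : Measurable (shiftOp α f) := by
  apply measurable_tsum_nonneg
  · intro p
    exact (measurable_const.indicator (measurableSet_dyadIco p.1 p.2)).const_mul _
  · intro p t
    exact mul_nonneg (mul_nonneg (hα0 _ _) (dyadAvg_nonneg hfnn _ _))
      (Set.indicator_nonneg (fun _ _ => zero_le_one) t)

lemma ofReal_indicator_comm {s : Set ℝ} {g : ℝ → ℝ} (t : ℝ) :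
    ENNReal.ofReal (s.indicator g t) = s.indicator (fun u => ENNReal.ofReal (g u)) t := by
  by_cases h : t ∈ s
  · rw [Set.indicator_of_mem h, Set.indicator_of_mem h]
  · rw [Set.indicator_of_notMem h, Set.indicator_of_notMem h, ENNReal.ofReal_zero]

section withL2
variable {l : ℝ} (hl0 : 0 < l) (hl1 : l < 1) {f : ℝ → ℝ} {α : ℕ → ℕ → ℝ}

include hl0 hl1 in
lemma ofReal_ftil (t : ℝ) :
    ENNReal.ofReal (ftil l f t) =
      ∑' m, ENNReal.ofReal
        (if Dig l m then (cellSet l m).indicator (fun s => f (TT l m s)) t else 0) := by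
  by_cases h : ∃ m, Dig l m ∧ t ∈ cellSet l m
  · obtain ⟨m, hm, ht⟩ := h
    rw [ftil_eq_on_cell hl0 hl1 hm ht,
      tsum_eq_single m (fun m' hne => by rw [piece_vanish hl0 hl1 hne hm ht, ENNReal.ofReal_zero]),
      if_pos hm, Set.indicator_of_mem ht]
  · push_neg at h
    rw [ftil_eq_zero hl0 hl1 h]
    have hz : ∀ m, ENNReal.ofReal
        (if Dig l m then (cellSet l m).indicator (fun s => f (TT l m s)) t else 0) = 0 := by
      intro m
      split_ifs with hm
      · rw [Set.indicator_of_notMem (h m hm), ENNReal.ofReal_zero]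
      · rw [ENNReal.ofReal_zero]
    rw [tsum_congr hz]
    simp

include hl0 hl1 in
lemma lintegral_piece (hf : Measurable f) {m : ℕ} (hm : Dig l m) :
    ∫⁻ t in Set.Ico (0:ℝ) 1,
        ENNReal.ofReal ((cellSet l m).indicator (fun s => f (TT l m s)) t) =
      ENNReal.ofReal (((2:ℝ) ^ (m+1))⁻¹) * ∫⁻ s in Set.Ico (0:ℝ) 1, ENNReal.ofReal (f s) := by
  have h1 : ∀ t, ENNReal.ofReal ((cellSet l m).indicator (fun s => f (TT l m s)) t) =
      (cellSet l m).indicator (fun u => ENNReal.ofReal (f (TT l m u))) t :=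
    fun t => ofReal_indicator_comm t
  rw [lintegral_congr h1]
  have hcellm : MeasurableSet (cellSet l m) := measurableSet_dyadIco _ _
  rw [lintegral_indicator hcellm, Measure.restrict_restrict hcellm,
    Set.inter_eq_self_of_subset_left (cellSet_subset hl0 hl1 m hm)]
  have h2 : ∫⁻ t in cellSet l m, ENNReal.ofReal (f (TT l m t))
      = ∫⁻ s, ENNReal.ofReal (f s) ∂(Measure.map (TT l m)
          (volume.restrict (TT l m ⁻¹' (Set.Ico (0:ℝ) 1)))) := by
    rw [lintegral_map (hf.ennreal_ofReal) (measurable_TT l m), TT_preimage_Ico01]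
  rw [h2, map_restrict_TT l m measurableSet_Ico, lintegral_smul_measure, smul_eq_mul]

include hl0 hl1 in
lemma digit_tsum_ennreal :
    ∑' m, (if Dig l m then ENNReal.ofReal (((2:ℝ) ^ (m+1))⁻¹) else 0) = ENNReal.ofReal l := by
  have hs := digit_hasSum hl0 hl1
  have hnn : ∀ m, 0 ≤ (if Dig l m then ((2:ℝ) ^ (m+1))⁻¹ else 0) := by
    intro m
    split_ifs
    · positivity
    · exact le_refl 0
  calc ∑' m, (if Dig l m then ENNReal.ofReal (((2:ℝ) ^ (m+1))⁻¹) else 0)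
      = ∑' m, ENNReal.ofReal (if Dig l m then ((2:ℝ) ^ (m+1))⁻¹ else 0) := by
        apply tsum_congr
        intro m
        split_ifs
        · rfl
        · exact ENNReal.ofReal_zero.symm
    _ = ENNReal.ofReal l := by
        rw [← ENNReal.ofReal_tsum_of_nonneg hnn hs.summable, hs.tsum_eq]

include hl0 hl1 in
lemma lintegral_ftil (hf : Measurable f) :
    ∫⁻ t in Set.Ico (0:ℝ) 1, ENNReal.ofReal (ftil l f t) =
      ENNReal.ofReal l * ∫⁻ s in Set.Ico (0:ℝ) 1, ENNReal.ofReal (f s) := by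
  rw [lintegral_congr (fun t => ofReal_ftil hl0 hl1 (f := f) t)]
  rw [lintegral_tsum (fun m => by
    apply Measurable.aemeasurable
    apply Measurable.ennreal_ofReal
    split_ifs
    · exact (hf.comp (measurable_TT l m)).indicator (measurableSet_dyadIco _ _)
    · exact measurable_const)]
  have h1 : ∀ m, ∫⁻ t in Set.Ico (0:ℝ) 1, ENNReal.ofReal
      (if Dig l m then (cellSet l m).indicator (fun s => f (TT l m s)) t else 0) =
      (if Dig l m then ENNReal.ofReal (((2:ℝ) ^ (m+1))⁻¹) else 0) *
        ∫⁻ s in Set.Ico (0:ℝ) 1, ENNReal.ofReal (f s) := by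
    intro m
    split_ifs with hm
    · exact lintegral_piece hl0 hl1 hf hm
    · simp
  rw [tsum_congr h1, ENNReal.tsum_mul_right, digit_tsum_ennreal hl0 hl1]

include hl0 hl1 in
lemma lintegral_Ico01 (hf : Measurable f) (hfnn : ∀ t, 0 ≤ f t)
    (hfi : IntegrableOn f (Set.Ico (0:ℝ) 1)) :
    ∫⁻ s in Set.Ico (0:ℝ) 1, ENNReal.ofReal (f s) =
      ENNReal.ofReal (∫ s in Set.Ico (0:ℝ) 1, f s) :=
  (ofReal_integral_eq_lintegral_ofReal hfi (Filter.Eventually.of_forall hfnn)).symm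

include hl0 hl1 in
lemma integrableOn_ftil (hf : Measurable f) (hfnn : ∀ t, 0 ≤ f t)
    (hfi : IntegrableOn f (Set.Ico (0:ℝ) 1)) :
    IntegrableOn (ftil l f) (Set.Ico (0:ℝ) 1) := by
  refine ⟨(measurable_ftil hf hfnn).aestronglyMeasurable, ?_⟩
  rw [hasFiniteIntegral_iff_norm]
  have h1 : ∀ t, ENNReal.ofReal ‖ftil l f t‖ = ENNReal.ofReal (ftil l f t) := by
    intro t
    rw [Real.norm_eq_abs, abs_of_nonneg (ftil_nonneg hfnn t)]
  rw [lintegral_congr h1, lintegral_ftil hl0 hl1 hf, lintegral_Ico01 hl0 hl1 hf hfnn hfi]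
  exact ENNReal.mul_lt_top ENNReal.ofReal_lt_top ENNReal.ofReal_lt_top

include hl0 hl1 in
lemma dyadAvg_ftil_zero (hf : Measurable f) (hfnn : ∀ t, 0 ≤ f t)
    (hfi : IntegrableOn f (Set.Ico (0:ℝ) 1)) :
    dyadAvg (ftil l f) 0 0 = l * dyadAvg f 0 0 := by
  unfold dyadAvg
  rw [pow_zero, one_mul, one_mul, dyadIco_zero]
  rw [integral_eq_lintegral_of_nonneg_ae
    (Filter.Eventually.of_forall (fun t => ftil_nonneg hfnn t))
    (measurable_ftil hf hfnn).aestronglyMeasurable]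
  rw [lintegral_ftil hl0 hl1 hf, lintegral_Ico01 hl0 hl1 hf hfnn hfi]
  rw [← ENNReal.ofReal_mul hl0.le, ENNReal.toReal_ofReal]
  exact mul_nonneg hl0.le (setIntegral_nonneg measurableSet_Ico fun t _ => hfnn t)

end withL2

section withL3
variable {l : ℝ} (hl0 : 0 < l) (hl1 : l < 1) {f : ℝ → ℝ} {α : ℕ → ℕ → ℝ}

include hl0 hl1 in
lemma shiftOp_ftil (hf : Measurable f) (hαz : ∀ n k, 2 ^ n ≤ k → α n k = 0)
    {m : ℕ} (hm : Dig l m) {t : ℝ} (ht : t ∈ cellSet l m) :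
    shiftOp (atil l α) (ftil l f) t = shiftOp α f (TT l m t) := by
  unfold shiftOp
  set G : ℕ × ℕ → ℝ := fun q =>
    α q.1 q.2 * dyadAvg f q.1 q.2 * (dyadIco q.1 q.2).indicator 1 (TT l m t) with hG
  set F : ℕ × ℕ → ℝ := fun p =>
    atil l α p.1 p.2 * dyadAvg (ftil l f) p.1 p.2 * (dyadIco p.1 p.2).indicator 1 t with hF
  have key : ∀ q1 q2 : ℕ, q2 < 2 ^ q1 →
      F (q1 + (m+1), q2 + 2 * bfl l m * 2 ^ q1) = G (q1, q2) := by
    intro q1 q2 hq2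
    rw [hF, hG]
    simp only
    rw [atil_emb hl0 hl1 hm hq2, dyadAvg_ftil hl0 hl1 hf hm hq2]
    congr 1
    rw [← TT_preimage_dyadIco l m q1 q2, indicator_one_preimage]
  refine tsum_eq_tsum_of_ne_zero_bij
    (fun q => ((q : ℕ × ℕ).1 + (m+1), (q : ℕ × ℕ).2 + 2 * bfl l m * 2 ^ (q : ℕ × ℕ).1)) ?_ ?_ ?_
  · rintro ⟨q, hq⟩ ⟨q', hq'⟩ he
    rw [Prod.ext_iff] at he
    obtain ⟨h1, h2⟩ := he
    simp only at h1 h2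
    have e1 : (q : ℕ × ℕ).1 = (q' : ℕ × ℕ).1 := by omega
    rw [e1] at h2
    have e2 : (q : ℕ × ℕ).2 = (q' : ℕ × ℕ).2 := by omega
    exact Subtype.ext (Prod.ext_iff.mpr ⟨e1, e2⟩)
  · rintro p hp
    have hFne : F p ≠ 0 := hp
    have hα : atil l α p.1 p.2 ≠ 0 := by
      intro h
      apply hFne
      rw [hF]
      simp only [h, zero_mul]
    have hind : t ∈ dyadIco p.1 p.2 := by
      by_contra hc
      apply hFne
      rw [hF]
      simp only [Set.indicator_of_notMem hc, mul_zero]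
    obtain ⟨m', hm', hmem⟩ := atil_ne_zero hα
    have hmm : m' = m := by
      by_contra hne
      exact Set.disjoint_left.mp (cellSet_disjoint hl0 hl1 hne hm' hm)
        (dyadIco_subset_of_mem hmem hind) ht
    rw [hmm] at hmem
    obtain ⟨q1, q2, hq2, hn, hj⟩ := mem_emb hmem
    have hpe : p = (q1 + (m+1), q2 + 2 * bfl l m * 2 ^ q1) := Prod.ext_iff.mpr ⟨hn, hj⟩
    have hGne : G (q1, q2) ≠ 0 := by
      rw [← key q1 q2 hq2, ← hpe]
      exact hFne
    exact ⟨⟨(q1, q2), hGne⟩, hpe.symm⟩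
  · rintro ⟨q, hq⟩
    have hα : α q.1 q.2 ≠ 0 := by
      intro h
      apply hq
      simp only [h, zero_mul]
    have hq2 : q.2 < 2 ^ q.1 := by
      by_contra hc
      push_neg at hc
      exact hα (hαz _ _ hc)
    exact key q.1 q.2 hq2

end withL3

section carleson
variable {l : ℝ} (hl0 : 0 < l) (hl1 : l < 1) {α : ℕ → ℕ → ℝ}

open Classical in
/-- The indicator of the condition "cell `m` is a dyadic subinterval of `J(n,k)`",
weighted by the cell's length. -/
def indCell (l : ℝ) (n k : ℕ) : ℕ → ℝ := fun m =>
  if Dig l m ∧ dyadMem n k (m+1) (2 * bfl l m) then ((2:ℝ) ^ (m+1))⁻¹ else 0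

open Classical in
/-- The sigma-type reindexing of the transplanted Carleson sum over `J(n,k)`. -/
def Gfun (l : ℝ) (α : ℕ → ℕ → ℝ) (n k : ℕ) : ℕ × (ℕ × ℕ) → ℝ := fun mq =>
  if Dig l mq.1 ∧ dyadMem n k (mq.1+1) (2 * bfl l mq.1) then
    α mq.2.1 mq.2.2 * ((2:ℝ) ^ (mq.2.1 + (mq.1+1)))⁻¹
  else 0

lemma summable_indCell (l : ℝ) (n k : ℕ) : Summable (indCell l n k) := by
  refine Summable.of_nonneg_of_le (fun m => ?_) (fun m => ?_)
    (summable_geometric_of_lt_one (le_of_lt one_half_pos) (by norm_num) :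
      Summable fun m => ((1:ℝ)/2) ^ m)
  · unfold indCell
    split_ifs
    · positivity
    · exact le_refl 0
  · unfold indCell
    split_ifs
    · rw [one_div, inv_pow, inv_le_inv₀ (by positivity) (by positivity)]
      apply pow_le_pow_right₀ (by norm_num)
      omega
    · positivity

include hl0 hl1 in
lemma cells_in_J_sum (n k : ℕ) : ∑' m, indCell l n k m ≤ ((2:ℝ) ^ n)⁻¹ := by
  classical
  refine Summable.tsum_le_of_sum_le (summable_indCell l n k) (fun F => ?_)
  have h1 : ∑ m ∈ F, indCell l n k m
      = ∑ m ∈ F.filter (fun m => Dig l m ∧ dyadMem n k (m+1) (2 * bfl l m)),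
          ((2:ℝ) ^ (m+1))⁻¹ := by
    rw [Finset.sum_filter]
    apply Finset.sum_congr rfl
    intro m _
    unfold indCell
    split_ifs <;> rfl
  set F' := F.filter (fun m => Dig l m ∧ dyadMem n k (m+1) (2 * bfl l m)) with hF'
  have hdisj : (↑F' : Set ℕ).PairwiseDisjoint (fun m => cellSet l m) := by
    intro a ha b hb hab
    have ha' := (Finset.mem_filter.mp ha).2.1
    have hb' := (Finset.mem_filter.mp hb).2.1
    exact cellSet_disjoint hl0 hl1 hab ha' hb'
  have hmeas : ∀ m ∈ F', MeasurableSet (cellSet l m) := fun m _ => measurableSet_dyadIco _ _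
  have hkey : ∑ m ∈ F', ENNReal.ofReal ((2:ℝ) ^ (m+1))⁻¹ ≤ ENNReal.ofReal (((2:ℝ) ^ n)⁻¹) := by
    calc ∑ m ∈ F', ENNReal.ofReal ((2:ℝ) ^ (m+1))⁻¹
        = ∑ m ∈ F', volume (cellSet l m) := by
          apply Finset.sum_congr rfl
          intro m _
          exact (volume_dyadIco (m+1) (2 * bfl l m)).symm
    _ = volume (⋃ m ∈ F', cellSet l m) := (measure_biUnion_finset hdisj hmeas).symm
    _ ≤ volume (dyadIco n k) := by
          apply measure_mono
          apply Set.iUnion₂_subset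
          intro m hm
          exact dyadIco_subset_of_mem (Finset.mem_filter.mp hm).2.2
    _ = ENNReal.ofReal (((2:ℝ) ^ n)⁻¹) := volume_dyadIco n k
  rw [← ENNReal.ofReal_sum_of_nonneg (fun m _ => by positivity)] at hkey
  rw [h1]
  exact (ENNReal.ofReal_le_ofReal_iff (by positivity)).mp hkey

lemma Gfun_eq (n k : ℕ) (mq : ℕ × (ℕ × ℕ)) :
    Gfun l α n k mq = indCell l n k mq.1 * (α mq.2.1 mq.2.2 * ((2:ℝ) ^ mq.2.1)⁻¹) := by
  unfold Gfun indCell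
  split_ifs
  · rw [pow_add]
    rw [mul_inv]
    ring
  · rw [zero_mul]

lemma Gfun_eq' (n k m : ℕ) (q : ℕ × ℕ) :
    Gfun l α n k (m, q) = indCell l n k m * (α q.1 q.2 * ((2:ℝ) ^ q.1)⁻¹) :=
  Gfun_eq n k (m, q)

/-- Evaluation of the sigma-type sum. -/
lemma tsum_Gfun (hα0 : ∀ n k, 0 ≤ α n k) (n k : ℕ) :
    ∑' mq : ℕ × (ℕ × ℕ), Gfun l α n k mq = totalMass α * ∑' m, indCell l n k m := by
  classical
  by_cases hMs : Summable (fun q : ℕ × ℕ => α q.1 q.2 * ((2:ℝ) ^ q.1)⁻¹)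
  · have hsec : ∀ m, Summable (fun q : ℕ × ℕ => Gfun l α n k (m, q)) := by
      intro m
      have := hMs.mul_left (indCell l n k m)
      exact this.congr (fun q => (Gfun_eq n k (m, q)).symm)
    have hsums : Summable (fun m => ∑' q : ℕ × ℕ, Gfun l α n k (m, q)) := by
      have h2 : ∀ m, ∑' q : ℕ × ℕ, Gfun l α n k (m, q)
          = indCell l n k m * totalMass α := by
        intro m
        rw [tsum_congr (fun q => Gfun_eq' n k m q), tsum_mul_left]
        rfl
      refine Summable.congr ((summable_indCell l n k).mul_right (totalMass α)) ?_
      intro m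
      exact (h2 m).symm
    have hG : Summable (Gfun l α n k) := by
      rw [summable_prod_of_nonneg ?_]
      · exact ⟨hsec, hsums⟩
      · intro mq
        rw [Gfun_eq n k mq]
        refine mul_nonneg ?_ ?_
        · unfold indCell
          split_ifs
          · positivity
          · exact le_refl 0
        · exact mul_nonneg (hα0 _ _) (by positivity)
    rw [Summable.tsum_prod' hG hsec]
    have h2 : ∀ m, ∑' q : ℕ × ℕ, Gfun l α n k (m, q) = totalMass α * indCell l n k m := by
      intro m
      rw [tsum_congr (fun q => Gfun_eq' n k m q), tsum_mul_left]
      unfold totalMass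
      ring
    rw [tsum_congr h2, tsum_mul_left]
  · have hM : totalMass α = 0 := tsum_eq_zero_of_not_summable hMs
    rw [hM, zero_mul]
    by_cases hex : ∃ m, Dig l m ∧ dyadMem n k (m+1) (2 * bfl l m)
    · obtain ⟨m0, hm0⟩ := hex
      have hGns : ¬ Summable (Gfun l α n k) := by
        intro hG
        apply hMs
        have hsec := hG.prod_factor m0
        have hc : ((2:ℝ) ^ (m0+1))⁻¹ ≠ 0 := by positivity
        have : Summable (fun q : ℕ × ℕ => ((2:ℝ) ^ (m0+1))⁻¹ * (α q.1 q.2 * ((2:ℝ) ^ q.1)⁻¹)) := by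
          refine hsec.congr (fun q => ?_)
          rw [Gfun_eq n k (m0, q)]
          unfold indCell
          rw [if_pos hm0]
        exact (summable_mul_left_iff hc).mp this
      rw [tsum_eq_zero_of_not_summable hGns]
    · push_neg at hex
      have hz : ∀ mq : ℕ × (ℕ × ℕ), Gfun l α n k mq = 0 := by
        intro mq
        unfold Gfun
        rw [if_neg]
        intro ⟨h1, h2⟩
        exact (hex mq.1 h1) h2
      rw [tsum_congr hz]
      exact tsum_zero

end carleson

section carleson2
variable {l : ℝ} (hl0 : 0 < l) (hl1 : l < 1) {α : ℕ → ℕ → ℝ}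

include hl0 hl1 in
/-- Reindexing of the transplanted Carleson sum when `J(n,k)` is not inside any cell. -/
lemma tsum_FCar_case2 (hαz : ∀ n k, 2 ^ n ≤ k → α n k = 0) (n k : ℕ)
    (hcase : ¬∃ m, Dig l m ∧ dyadMem (m+1) (2 * bfl l m) n k) :
    (∑' p : ℕ × ℕ, {q : ℕ × ℕ | dyadMem n k q.1 q.2}.indicator
        (fun q => atil l α q.1 q.2 * ((2:ℝ) ^ q.1)⁻¹) p)
      = ∑' mq : ℕ × (ℕ × ℕ), Gfun l α n k mq := by
  classical
  have hGdata : ∀ mq : ℕ × (ℕ × ℕ), Gfun l α n k mq ≠ 0 →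
      (Dig l mq.1 ∧ dyadMem n k (mq.1+1) (2 * bfl l mq.1)) ∧ α mq.2.1 mq.2.2 ≠ 0 ∧
        mq.2.2 < 2 ^ mq.2.1 := by
    intro mq hne
    have hcond : Dig l mq.1 ∧ dyadMem n k (mq.1+1) (2 * bfl l mq.1) := by
      by_contra hcon
      apply hne
      unfold Gfun
      rw [if_neg hcon]
    have hval : α mq.2.1 mq.2.2 * ((2:ℝ) ^ (mq.2.1 + (mq.1+1)))⁻¹ ≠ 0 := by
      intro hz
      apply hne
      unfold Gfun
      rw [if_pos hcond, hz]
    have hαne : α mq.2.1 mq.2.2 ≠ 0 := fun hz => hval (by rw [hz, zero_mul])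
    have hq2 : mq.2.2 < 2 ^ mq.2.1 := by
      by_contra hcm
      push_neg at hcm
      exact hαne (hαz _ _ hcm)
    exact ⟨hcond, hαne, hq2⟩
  refine (tsum_eq_tsum_of_ne_zero_bij
    (fun x => ((x : ℕ × (ℕ × ℕ)).2.1 + ((x : ℕ × (ℕ × ℕ)).1 + 1),
      (x : ℕ × (ℕ × ℕ)).2.2 + 2 * bfl l (x : ℕ × (ℕ × ℕ)).1 * 2 ^ (x : ℕ × (ℕ × ℕ)).2.1))
    ?_ ?_ ?_)
  · -- injective
    rintro ⟨⟨m, q⟩, hx⟩ ⟨⟨m', q'⟩, hx'⟩ he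
    obtain ⟨_, hα1, hq2⟩ := hGdata _ hx
    obtain ⟨hcond', hα1', hq2'⟩ := hGdata _ hx'
    obtain ⟨hcond, _, _⟩ := hGdata _ hx
    rw [Prod.ext_iff] at he
    obtain ⟨he1, he2⟩ := he
    simp only at he1 he2 hq2 hq2' hcond hcond'
    have hmm : m = m' := by
      by_contra hne
      have hsub1 : dyadIco (q.1 + (m+1)) (q.2 + 2 * bfl l m * 2 ^ q.1) ⊆ cellSet l m :=
        dyadIco_subset_of_mem (emb_mem hq2)
      have hsub2 : dyadIco (q'.1 + (m'+1)) (q'.2 + 2 * bfl l m' * 2 ^ q'.1) ⊆ cellSet l m' :=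
        dyadIco_subset_of_mem (emb_mem hq2')
      obtain ⟨t0, ht0⟩ := dyadIco_nonempty (q.1 + (m+1)) (q.2 + 2 * bfl l m * 2 ^ q.1)
      have ht0' := ht0
      rw [he1, he2] at ht0'
      exact Set.disjoint_left.mp (cellSet_disjoint hl0 hl1 hne hcond.1 hcond'.1)
        (hsub1 ht0) (hsub2 ht0')
    subst hmm
    have hq1 : q.1 = q'.1 := by omega
    rw [hq1] at he2
    have hq2e : q.2 = q'.2 := by omega
    exact Subtype.ext (Prod.ext_iff.mpr ⟨rfl, Prod.ext_iff.mpr ⟨hq1, hq2e⟩⟩)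
  · -- support coverage
    rintro p hp
    have hpne : ({q : ℕ × ℕ | dyadMem n k q.1 q.2}.indicator
        (fun q => atil l α q.1 q.2 * ((2:ℝ) ^ q.1)⁻¹)) p ≠ 0 := hp
    have hmemJ : p ∈ {q : ℕ × ℕ | dyadMem n k q.1 q.2} := by
      by_contra hc
      exact hpne (Set.indicator_of_notMem hc _)
    rw [Set.indicator_of_mem hmemJ] at hpne
    have hα1 : atil l α p.1 p.2 ≠ 0 := fun hz => hpne (by rw [hz, zero_mul])
    obtain ⟨m1, hm1, hmem1⟩ := atil_ne_zero hα1
    obtain ⟨q1, q2, hq2, hn1, hj1⟩ := mem_emb hmem1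
    obtain ⟨t0, ht0⟩ := dyadIco_nonempty p.1 p.2
    have htJ : t0 ∈ dyadIco n k := dyadIco_subset_of_mem hmemJ ht0
    have htC : t0 ∈ cellSet l m1 := dyadIco_subset_of_mem hmem1 ht0
    have hcond : dyadMem n k (m1+1) (2 * bfl l m1) := by
      by_cases hcmp : m1 + 1 ≤ n
      · exact absurd ⟨m1, hm1, dyadMem_of_inter hcmp ⟨t0, htC, htJ⟩⟩ hcase
      · exact dyadMem_of_inter (by omega) ⟨t0, htJ, htC⟩
    have hαq : α q1 q2 ≠ 0 := by
      have heq := atil_eq hl0 hl1 (α := α) hm1 hmem1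
      rw [heq] at hα1
      have e1 : p.1 - (m1+1) = q1 := by omega
      have e2 : p.2 - 2 * bfl l m1 * 2 ^ q1 = q2 := by omega
      rwa [e1, e2] at hα1
    have hGne : Gfun l α n k (m1, (q1, q2)) ≠ 0 := by
      unfold Gfun
      rw [if_pos ⟨hm1, hcond⟩]
      exact mul_ne_zero hαq (by positivity)
    refine ⟨⟨(m1, (q1, q2)), hGne⟩, ?_⟩
    exact (Prod.ext_iff.mpr ⟨hn1, hj1⟩).symm
  · -- value match
    rintro ⟨⟨m, q⟩, hx⟩
    obtain ⟨hcond, hα1, hq2⟩ := hGdata _ hx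
    simp only at hcond hα1 hq2 ⊢
    have hmem : dyadMem n k (q.1 + (m+1)) (q.2 + 2 * bfl l m * 2 ^ q.1) :=
      dyadMem_trans hcond.2 (emb_mem hq2)
    rw [Set.indicator_of_mem (show (q.1 + (m+1), q.2 + 2 * bfl l m * 2 ^ q.1) ∈
      {q : ℕ × ℕ | dyadMem n k q.1 q.2} from hmem)]
    rw [atil_emb hl0 hl1 hcond.1 hq2]
    unfold Gfun
    rw [if_pos hcond]

include hl0 hl1 in
lemma totalMass_atil (hα0 : ∀ n k, 0 ≤ α n k) (hαz : ∀ n k, 2 ^ n ≤ k → α n k = 0) :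
    totalMass (atil l α) = l * totalMass α := by
  have hstep0 : totalMass (atil l α) = ∑' p : ℕ × ℕ,
      {q : ℕ × ℕ | dyadMem 0 0 q.1 q.2}.indicator
        (fun q => atil l α q.1 q.2 * ((2:ℝ) ^ q.1)⁻¹) p := by
    apply tsum_congr
    intro p
    by_cases h : p ∈ {q : ℕ × ℕ | dyadMem 0 0 q.1 q.2}
    · rw [Set.indicator_of_mem h]
    · rw [Set.indicator_of_notMem h]
      have h2 : 2 ^ p.1 ≤ p.2 := by
        by_contra hc
        push_neg at hc
        refine h ⟨Nat.zero_le _, by simp, ?_⟩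
        simpa using hc
      rw [atil_vanish hl0 hl1 h2, zero_mul]
  have hcase : ¬∃ m, Dig l m ∧ dyadMem (m+1) (2 * bfl l m) 0 0 := by
    rintro ⟨m, _, hmem, _⟩
    omega
  rw [hstep0, tsum_FCar_case2 hl0 hl1 hαz 0 0 hcase, tsum_Gfun hα0 0 0]
  have hind : ∑' m, indCell l 0 0 m = l := by
    have hcong : ∀ m, indCell l 0 0 m = (if Dig l m then ((2:ℝ) ^ (m+1))⁻¹ else 0) := by
      intro m
      unfold indCell
      by_cases hm : Dig l m
      · have hmem : dyadMem 0 0 (m+1) (2 * bfl l m) := by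
          refine ⟨Nat.zero_le _, by simp, ?_⟩
          have := cell_lt hl0 hl1 m hm
          simpa using (by omega : 2 * bfl l m < 2 ^ (m+1))
        rw [if_pos ⟨hm, hmem⟩, if_pos hm]
      · rw [if_neg (fun hc => hm hc.1), if_neg hm]
    rw [tsum_congr hcong, (digit_hasSum hl0 hl1).tsum_eq]
  rw [hind]
  ring

include hl0 hl1 in
lemma carleson_atil (hα0 : ∀ n k, 0 ≤ α n k) (hαz : ∀ n k, 2 ^ n ≤ k → α n k = 0)
    (hC : CarlesonLeOne α) (hM1 : totalMass α ≤ 1) : CarlesonLeOne (atil l α) := by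
  intro n k hk
  by_cases hcase : ∃ m, Dig l m ∧ dyadMem (m+1) (2 * bfl l m) n k
  · -- J(n,k) is inside a cell
    obtain ⟨m0, hm0, hmem⟩ := hcase
    obtain ⟨n', k', hk', hn, hj⟩ := mem_emb hmem
    subst hn
    subst hj
    set c := ((2:ℝ) ^ (m0+1))⁻¹ with hc
    have step : (∑' p : ℕ × ℕ,
        {q : ℕ × ℕ | dyadMem (n' + (m0+1)) (k' + 2 * bfl l m0 * 2 ^ n') q.1 q.2}.indicator
          (fun q => atil l α q.1 q.2 * ((2:ℝ) ^ q.1)⁻¹) p)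
        = ∑' q : ℕ × ℕ, c * ({q : ℕ × ℕ | dyadMem n' k' q.1 q.2}.indicator
            (fun q => α q.1 q.2 * ((2:ℝ) ^ q.1)⁻¹) q) := by
      have hgdata : ∀ q : ℕ × ℕ,
          c * ({q : ℕ × ℕ | dyadMem n' k' q.1 q.2}.indicator
            (fun q => α q.1 q.2 * ((2:ℝ) ^ q.1)⁻¹) q) ≠ 0 →
          dyadMem n' k' q.1 q.2 ∧ α q.1 q.2 ≠ 0 ∧ q.2 < 2 ^ q.1 := by
        intro q hq
        have hq1 : ({q : ℕ × ℕ | dyadMem n' k' q.1 q.2}.indicator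
            (fun q => α q.1 q.2 * ((2:ℝ) ^ q.1)⁻¹) q) ≠ 0 :=
          fun hz => hq (by rw [hz, mul_zero])
        have hmemq : q ∈ {q : ℕ × ℕ | dyadMem n' k' q.1 q.2} := by
          by_contra hcq
          exact hq1 (Set.indicator_of_notMem hcq _)
        rw [Set.indicator_of_mem hmemq] at hq1
        have hαq : α q.1 q.2 ≠ 0 := fun hz => hq1 (by rw [hz, zero_mul])
        have hq2 : q.2 < 2 ^ q.1 := by
          by_contra hcm
          push_neg at hcm
          exact hαq (hαz _ _ hcm)
        exact ⟨hmemq, hαq, hq2⟩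
      refine (tsum_eq_tsum_of_ne_zero_bij
        (fun x => ((x : ℕ × ℕ).1 + (m0+1), (x : ℕ × ℕ).2 + 2 * bfl l m0 * 2 ^ (x : ℕ × ℕ).1))
        ?_ ?_ ?_)
      · rintro ⟨q, hq⟩ ⟨q', hq'⟩ he
        rw [Prod.ext_iff] at he
        obtain ⟨he1, he2⟩ := he
        simp only at he1 he2
        have e1 : q.1 = q'.1 := by omega
        rw [e1] at he2
        have e2 : q.2 = q'.2 := by omega
        exact Subtype.ext (Prod.ext_iff.mpr ⟨e1, e2⟩)
      · rintro p hp
        have hpne : ({q : ℕ × ℕ | dyadMem (n' + (m0+1)) (k' + 2 * bfl l m0 * 2 ^ n')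
            q.1 q.2}.indicator (fun q => atil l α q.1 q.2 * ((2:ℝ) ^ q.1)⁻¹)) p ≠ 0 := hp
        have hmemJ : p ∈ {q : ℕ × ℕ | dyadMem (n' + (m0+1)) (k' + 2 * bfl l m0 * 2 ^ n')
            q.1 q.2} := by
          by_contra hcq
          exact hpne (Set.indicator_of_notMem hcq _)
        rw [Set.indicator_of_mem hmemJ] at hpne
        have hα1 : atil l α p.1 p.2 ≠ 0 := fun hz => hpne (by rw [hz, zero_mul])
        obtain ⟨m1, hm1, hmem1⟩ := atil_ne_zero hα1
        have hmm : m1 = m0 := by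
          by_contra hne
          obtain ⟨t0, ht0⟩ := dyadIco_nonempty p.1 p.2
          have htC : t0 ∈ cellSet l m1 := dyadIco_subset_of_mem hmem1 ht0
          have htC0 : t0 ∈ cellSet l m0 :=
            dyadIco_subset_of_mem hmem (dyadIco_subset_of_mem hmemJ ht0)
          exact Set.disjoint_left.mp (cellSet_disjoint hl0 hl1 hne hm1 hm0) htC htC0
        subst hmm
        obtain ⟨q1, q2, hq2, hn1, hj1⟩ := mem_emb hmem1
        have hαq : α q1 q2 ≠ 0 := by
          have heq := atil_eq hl0 hl1 (α := α) hm1 hmem1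
          rw [heq] at hα1
          have e1 : p.1 - (m1+1) = q1 := by omega
          have e2 : p.2 - 2 * bfl l m1 * 2 ^ q1 = q2 := by omega
          rwa [e1, e2] at hα1
        have hmemq : dyadMem n' k' q1 q2 := by
          have hp2 := hmemJ
          rw [Set.mem_setOf_eq, hn1, hj1] at hp2
          exact (emb_trans_iff hq2).mp hp2
        have hgne : c * ({q : ℕ × ℕ | dyadMem n' k' q.1 q.2}.indicator
            (fun q => α q.1 q.2 * ((2:ℝ) ^ q.1)⁻¹) (q1, q2)) ≠ 0 := by
          rw [Set.indicator_of_mem (show (q1, q2) ∈ {q : ℕ × ℕ | dyadMem n' k' q.1 q.2}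
            from hmemq)]
          exact mul_ne_zero (by positivity) (mul_ne_zero hαq (by positivity))
        refine ⟨⟨(q1, q2), hgne⟩, ?_⟩
        exact (Prod.ext_iff.mpr ⟨hn1, hj1⟩).symm
      · rintro ⟨q, hq⟩
        obtain ⟨hmemq, hαq, hq2⟩ := hgdata q hq
        simp only
        have hmemJ : dyadMem (n' + (m0+1)) (k' + 2 * bfl l m0 * 2 ^ n')
            (q.1 + (m0+1)) (q.2 + 2 * bfl l m0 * 2 ^ q.1) := (emb_trans_iff hq2).mpr hmemq
        rw [Set.indicator_of_mem (show (q.1 + (m0+1), q.2 + 2 * bfl l m0 * 2 ^ q.1) ∈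
          {q : ℕ × ℕ | dyadMem (n' + (m0+1)) (k' + 2 * bfl l m0 * 2 ^ n') q.1 q.2} from hmemJ)]
        rw [Set.indicator_of_mem (show q ∈ {q : ℕ × ℕ | dyadMem n' k' q.1 q.2} from hmemq)]
        rw [atil_emb hl0 hl1 hm0 hq2, hc, pow_add, mul_inv]
        ring
    rw [step, tsum_mul_left]
    have hCb := hC n' k' hk'
    have hcnn : (0:ℝ) ≤ c := by rw [hc]; positivity
    calc c * (∑' q : ℕ × ℕ, {q : ℕ × ℕ | dyadMem n' k' q.1 q.2}.indicator
          (fun q => α q.1 q.2 * ((2:ℝ) ^ q.1)⁻¹) q)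
        ≤ c * ((2:ℝ) ^ n')⁻¹ := mul_le_mul_of_nonneg_left hCb hcnn
      _ = ((2:ℝ) ^ (n' + (m0+1)))⁻¹ := by
          rw [hc, pow_add, mul_inv]
          ring
  · -- J(n,k) is not inside any cell
    rw [tsum_FCar_case2 hl0 hl1 hαz n k hcase, tsum_Gfun hα0 n k]
    have h1 := cells_in_J_sum hl0 hl1 n k
    have hM0 : 0 ≤ totalMass α :=
      tsum_nonneg (fun p => mul_nonneg (hα0 _ _) (by positivity))
    have hindnn : 0 ≤ ∑' m, indCell l n k m := by
      apply tsum_nonneg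
      intro m
      unfold indCell
      split_ifs
      · positivity
      · exact le_refl 0
    calc totalMass α * ∑' m, indCell l n k m ≤ 1 * ((2:ℝ) ^ n)⁻¹ :=
          mul_le_mul hM1 h1 hindnn zero_le_one
      _ = ((2:ℝ) ^ n)⁻¹ := one_mul _

end carleson2

section superlevel
variable {l : ℝ} (hl0 : 0 < l) (hl1 : l < 1) {f : ℝ → ℝ} {α : ℕ → ℕ → ℝ}

lemma volume_preimage_TT (l : ℝ) (m : ℕ) {s : Set ℝ} (hs : MeasurableSet s) :
    volume (TT l m ⁻¹' s) = ENNReal.ofReal (((2:ℝ) ^ (m+1))⁻¹) * volume s := by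
  unfold TT
  exact volume_preimage_affine (by positivity) hs

include hl0 hl1 in
lemma volume_superlevel (hf : Measurable f) (hfnn : ∀ t, 0 ≤ f t)
    (hα0 : ∀ n k, 0 ≤ α n k) (hαz : ∀ n k, 2 ^ n ≤ k → α n k = 0) :
    ENNReal.ofReal l * volume {t ∈ Set.Ico (0:ℝ) 1 | 1 < shiftOp α f t}
      ≤ volume {t ∈ Set.Ico (0:ℝ) 1 | 1 < shiftOp (atil l α) (ftil l f) t} := by
  classical
  set E := {t ∈ Set.Ico (0:ℝ) 1 | 1 < shiftOp α f t} with hE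
  have hEeq : E = Set.Ico (0:ℝ) 1 ∩ (shiftOp α f) ⁻¹' (Set.Ioi 1) := rfl
  have hEm : MeasurableSet E := by
    rw [hEeq]
    exact measurableSet_Ico.inter ((measurable_shiftOp hα0 hfnn) measurableSet_Ioi)
  have hEsub : E ⊆ Set.Ico (0:ℝ) 1 := fun t ht => ht.1
  set A : ℕ → Set ℝ := fun m => if Dig l m then TT l m ⁻¹' E else ∅ with hA
  have hAsub : ∀ m, A m ⊆ cellSet l m := by
    intro m
    simp only [hA]
    split_ifs with hm
    · refine subset_trans (Set.preimage_mono hEsub) ?_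
      rw [TT_preimage_Ico01]
    · exact Set.empty_subset _
  have hAm : ∀ m, MeasurableSet (A m) := by
    intro m
    simp only [hA]
    split_ifs
    · exact (measurable_TT l m) hEm
    · exact MeasurableSet.empty
  have hAdisj : Pairwise (Function.onFun Disjoint A) := by
    intro m m' hne
    by_cases hm : Dig l m
    · by_cases hm' : Dig l m'
      · exact Disjoint.mono (hAsub m) (hAsub m') (cellSet_disjoint hl0 hl1 hne hm hm')
      · have : A m' = ∅ := if_neg hm'
        rw [Function.onFun, this]
        exact disjoint_bot_right
    · have : A m = ∅ := if_neg hm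
      rw [Function.onFun, this]
      exact disjoint_bot_left
  have hUsub : (⋃ m, A m) ⊆ {t ∈ Set.Ico (0:ℝ) 1 | 1 < shiftOp (atil l α) (ftil l f) t} := by
    intro t ht
    obtain ⟨m, hmt⟩ := Set.mem_iUnion.mp ht
    by_cases hm : Dig l m
    · have h2 : t ∈ (if Dig l m then TT l m ⁻¹' E else ∅) := hmt
      rw [if_pos hm] at h2
      have hmt' : t ∈ TT l m ⁻¹' E := h2
      have htc : t ∈ cellSet l m := hAsub m hmt
      have hTt : TT l m t ∈ E := hmt'
      refine ⟨cellSet_subset hl0 hl1 m hm htc, ?_⟩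
      rw [shiftOp_ftil hl0 hl1 hf hαz hm htc]
      exact hTt.2
    · have h2 : t ∈ (if Dig l m then TT l m ⁻¹' E else ∅) := hmt
      rw [if_neg hm] at h2
      exact absurd h2 (Set.notMem_empty t)
  have hvolA : ∀ m, volume (A m) =
      (if Dig l m then ENNReal.ofReal (((2:ℝ) ^ (m+1))⁻¹) else 0) * volume E := by
    intro m
    simp only [hA]
    split_ifs with hm
    · exact volume_preimage_TT l m hEm
    · simp
  calc ENNReal.ofReal l * volume E
      = (∑' m, (if Dig l m then ENNReal.ofReal (((2:ℝ) ^ (m+1))⁻¹) else 0)) * volume E := by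
        rw [digit_tsum_ennreal hl0 hl1]
    _ = ∑' m, volume (A m) := by
        rw [← ENNReal.tsum_mul_right]
        exact tsum_congr (fun m => (hvolA m).symm)
    _ = volume (⋃ m, A m) := (measure_iUnion hAdisj hAm).symm
    _ ≤ volume {t ∈ Set.Ico (0:ℝ) 1 | 1 < shiftOp (atil l α) (ftil l f) t} :=
        measure_mono hUsub

end superlevel

section wlog
variable {x y : ℝ} {f : ℝ → ℝ} {α : ℕ → ℕ → ℝ}

lemma admissible_measurable (hA : Admissible x y f α) :
    ∃ g : ℝ → ℝ, Measurable g ∧ Admissible x y g α ∧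
      {t ∈ Set.Ico (0:ℝ) 1 | 1 < shiftOp α g t} =
        {t ∈ Set.Ico (0:ℝ) 1 | 1 < shiftOp α f t} := by
  obtain ⟨hf0, hfi, havg, hα0, hαz, hC, hM⟩ := hA
  have hsm : AEStronglyMeasurable f (volume.restrict (Set.Ico (0:ℝ) 1)) := hfi.1
  set g0 := hsm.mk f with hg0def
  have hg0 : StronglyMeasurable g0 := hsm.stronglyMeasurable_mk
  have haeg0 : f =ᵐ[volume.restrict (Set.Ico (0:ℝ) 1)] g0 := hsm.ae_eq_mk
  set g : ℝ → ℝ := Set.indicator (Set.Ico (0:ℝ) 1) (fun t => max (g0 t) 0) with hgdef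
  have hgm : Measurable g := (hg0.measurable.max measurable_const).indicator measurableSet_Ico
  have hgnn : ∀ t, 0 ≤ g t := fun t => Set.indicator_nonneg (fun s _ => le_max_right _ _) t
  have hae : f =ᵐ[volume.restrict (Set.Ico (0:ℝ) 1)] g := by
    filter_upwards [haeg0, ae_restrict_mem measurableSet_Ico] with t h1 h2
    rw [hgdef]
    rw [Set.indicator_of_mem h2, ← h1, max_eq_left (hf0 t)]
  have hgi : IntegrableOn g (Set.Ico (0:ℝ) 1) := hfi.congr hae
  have havg' : ∀ n k : ℕ, k < 2 ^ n → dyadAvg g n k = dyadAvg f n k := by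
    intro n k hk
    unfold dyadAvg
    congr 1
    apply integral_congr_ae
    have h3 : f =ᶠ[ae (volume.restrict (dyadIco n k))] g :=
      ae_restrict_of_ae_restrict_of_subset (dyadIco_subset_Ico01 hk) hae
    exact h3.symm
  have hshift : shiftOp α g = shiftOp α f := by
    funext t
    unfold shiftOp
    apply tsum_congr
    intro p
    by_cases hz : α p.1 p.2 = 0
    · rw [hz, zero_mul, zero_mul, zero_mul, zero_mul]
    · have hk : p.2 < 2 ^ p.1 := by
        by_contra hc
        push_neg at hc
        exact hz (hαz _ _ hc)
      rw [havg' p.1 p.2 hk]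
  refine ⟨g, hgm, ⟨hgnn, hgi, ?_, hα0, hαz, hC, hM⟩, ?_⟩
  · rw [havg' 0 0 (by norm_num)]
    exact havg
  · rw [hshift]

end wlog

end Aux
end AuxSect
end


/-- Superlinearity of the Bellman function `E(x,y) = 𝔹(x,y,1)` along rays through the
origin: for `λ ∈ (0,1]`, `E(x,y) ≥ λ E(x/λ, y/λ)` whenever `(x/λ, y/λ)` lies in the
domain `[0,∞) × [0,1]`. -/
theorem bellman_superlinear (x y l : ℝ) (hx : 0 ≤ x) (hy : 0 ≤ y) (hl : 0 < l)
    (hl1 : l ≤ 1) (hyl : y ≤ l) :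
    l * BellmanE (x / l) (y / l) ≤ BellmanE x y := by
  classical
  rcases eq_or_lt_of_le hl1 with heq | hlt
  · rw [heq, div_one, div_one, one_mul]
  have hBnn : 0 ≤ BellmanE x y := by
    unfold BellmanE
    apply Real.sSup_nonneg
    rintro r ⟨f, α, _, rfl⟩
    exact ENNReal.toReal_nonneg
  have hbdd : BddAbove {r : ℝ | ∃ f α, Admissible x y f α ∧
      r = (volume {t ∈ Set.Ico (0:ℝ) 1 | 1 < shiftOp α f t}).toReal} := by
    refine ⟨1, ?_⟩
    rintro r ⟨f, α, _, rfl⟩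
    have h1 : volume {t ∈ Set.Ico (0:ℝ) 1 | 1 < shiftOp α f t} ≤ volume (Set.Ico (0:ℝ) 1) :=
      measure_mono (fun t ht => ht.1)
    have h2 : volume (Set.Ico (0:ℝ) 1) = 1 := by
      rw [Real.volume_Ico]
      norm_num
    rw [h2] at h1
    calc (volume {t ∈ Set.Ico (0:ℝ) 1 | 1 < shiftOp α f t}).toReal
        ≤ (1 : ENNReal).toReal := ENNReal.toReal_mono ENNReal.one_ne_top h1
      _ = 1 := ENNReal.toReal_one
  have key : ∀ r ∈ {r : ℝ | ∃ f α, Admissible (x/l) (y/l) f α ∧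
      r = (volume {t ∈ Set.Ico (0:ℝ) 1 | 1 < shiftOp α f t}).toReal},
      l * r ≤ BellmanE x y := by
    rintro r ⟨f, α, hA, rfl⟩
    obtain ⟨g, hgm, hAg, hEset⟩ := Aux.admissible_measurable hA
    obtain ⟨hg0, hgi, havg, hα0, hαz, hC, hM⟩ := hAg
    have hM1 : totalMass α ≤ 1 := by
      rw [hM]
      exact (div_le_one hl).mpr hyl
    have hAdm : Admissible x y (Aux.ftil l g) (Aux.atil l α) := by
      refine ⟨Aux.ftil_nonneg hg0, Aux.integrableOn_ftil hl hlt hgm hg0 hgi, ?_,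
        Aux.atil_nonneg hα0, fun n k h => Aux.atil_vanish hl hlt h,
        Aux.carleson_atil hl hlt hα0 hαz hC hM1, ?_⟩
      · rw [Aux.dyadAvg_ftil_zero hl hlt hgm hg0 hgi, havg]
        field_simp
      · rw [Aux.totalMass_atil hl hlt hα0 hαz, hM]
        field_simp
    have hEb := Aux.volume_superlevel hl hlt hgm hg0 hα0 hαz
    have hrS : (volume {t ∈ Set.Ico (0:ℝ) 1 |
          1 < shiftOp (Aux.atil l α) (Aux.ftil l g) t}).toReal ∈
        {r : ℝ | ∃ f α, Admissible x y f α ∧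
          r = (volume {t ∈ Set.Ico (0:ℝ) 1 | 1 < shiftOp α f t}).toReal} :=
      ⟨Aux.ftil l g, Aux.atil l α, hAdm, rfl⟩
    have hfin : volume {t ∈ Set.Ico (0:ℝ) 1 |
        1 < shiftOp (Aux.atil l α) (Aux.ftil l g) t} ≠ ⊤ := by
      have h1 : volume {t ∈ Set.Ico (0:ℝ) 1 | 1 < shiftOp (Aux.atil l α) (Aux.ftil l g) t}
          ≤ volume (Set.Ico (0:ℝ) 1) := measure_mono (fun t ht => ht.1)
      exact ne_top_of_le_ne_top (by rw [Real.volume_Ico]; exact ENNReal.ofReal_ne_top) h1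
    have hstep : l * (volume {t ∈ Set.Ico (0:ℝ) 1 | 1 < shiftOp α f t}).toReal
        ≤ (volume {t ∈ Set.Ico (0:ℝ) 1 | 1 < shiftOp (Aux.atil l α) (Aux.ftil l g) t}).toReal := by
      rw [← hEset]
      have h2 := ENNReal.toReal_mono hfin hEb
      rwa [ENNReal.toReal_mul, ENNReal.toReal_ofReal hl.le] at h2
    calc l * (volume {t ∈ Set.Ico (0:ℝ) 1 | 1 < shiftOp α f t}).toReal
        ≤ (volume {t ∈ Set.Ico (0:ℝ) 1 |
            1 < shiftOp (Aux.atil l α) (Aux.ftil l g) t}).toReal := hstep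
      _ ≤ BellmanE x y := le_csSup hbdd hrS
  have hsup : BellmanE (x/l) (y/l) ≤ BellmanE x y / l := by
    unfold BellmanE
    apply Real.sSup_le
    · intro r hr
      rw [le_div_iff₀ hl, mul_comm]
      exact key r hr
    · exact div_nonneg hBnn hl.le
  calc l * BellmanE (x/l) (y/l) ≤ l * (BellmanE x y / l) :=
        mul_le_mul_of_nonneg_left hsup hl.le
    _ = BellmanE x y := by field_simp
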